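/- Let D1, D3 : ℝ → ℝ satisfy D1(t) + D3(t) = ∫_0^t exp(2(e^{-s}-1))·e^{-s} ds (the first-line density of the discrete parking process on ℤ, obtained from (D1+D3)' = (f0+f2)^2·e^{-t} with f0+f2 = exp(e^{-t}-1) and D1(0)+D3(0)=0). Then lim_{t→∞} (D1(t)+D3(t)) = (1 - e^{-2})/2. -/

import Mathlib

open Real Filter

lemma integral_eval (t : ℝ) :
    (∫ s in (0:ℝ)..t, exp (2 * (exp (-s) - 1)) * exp (-s))
      = (1 - exp (2 * (exp (-t) - 1))) / 2 := by
  have key : ∀ s : ℝ, HasDerivAt (fun x : ℝ => -(1/2) * exp (2 * (exp (-x) - 1)))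
      (exp (2 * (exp (-s) - 1)) * exp (-s)) s := by
    intro s
    have h1 : HasDerivAt (fun x : ℝ => 2 * (exp (-x) - 1)) (2 * (-exp (-s))) s := by
      have : HasDerivAt (fun x : ℝ => exp (-x)) (-exp (-s)) s := by
        exact ((Real.hasDerivAt_exp (-s)).comp s (hasDerivAt_neg s)).congr_deriv (by simp)
      simpa using ((this.sub_const 1).const_mul 2)
    have h2 := (Real.hasDerivAt_exp (2 * (exp (-s) - 1))).comp s h1
    have h3 := h2.const_mul (-(1/2))
    refine h3.congr_deriv ?_
    ring
  rw [intervalIntegral.integral_eq_sub_of_hasDerivAt (fun s _ => key s)]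
  · simp; ring
  · apply Continuous.intervalIntegrable
    continuity

theorem first_line_density_limit
    (D1 D3 : ℝ → ℝ)
    (h : ∀ t, D1 t + D3 t = ∫ s in (0:ℝ)..t, exp (2 * (exp (-s) - 1)) * exp (-s)) :
    Tendsto (fun t => D1 t + D3 t) atTop (nhds ((1 - exp (-2)) / 2)) := by
  have heq : (fun t => D1 t + D3 t) = fun t => (1 - exp (2 * (exp (-t) - 1))) / 2 := by
    funext t; rw [h t, integral_eval]
  rw [heq]
  have h1 : Tendsto (fun t : ℝ => exp (-t)) atTop (nhds 0) :=
    Real.tendsto_exp_neg_atTop_nhds_zero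
  have h2 : Tendsto (fun t : ℝ => 2 * (exp (-t) - 1)) atTop (nhds (-2)) := by
    have := (h1.sub_const 1).const_mul 2
    simpa using this
  have h3 : Tendsto (fun t : ℝ => exp (2 * (exp (-t) - 1))) atTop (nhds (exp (-2))) :=
    (Real.continuous_exp.continuousAt.tendsto).comp h2
  simpa using ((tendsto_const_nhds.sub h3).div_const 2)
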